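/- arXiv:2605.03074 — 5 statements merged into one kernel-verified Lean document; each statement's English description precedes it below -/
import Mathlib

section
/- If U, V, Ũ, Ṽ are n×n real symmetric positive definite matrices with det U = det Ũ = 1 and V ⊗ U = Ṽ ⊗ Ũ (Kronecker product), then U = Ũ and V = Ṽ. -/
open Matrix Kronecker

lemma posdef_diag_pos {n : ℕ} {A : Matrix (Fin n) (Fin n) ℝ} (hA : A.PosDef) (i : Fin n) :
    0 < A i i := by
  exact hA.diag_pos

/-- Injectivity of the determinant-normalized Kronecker parametrization:
if `det U = det Ũ = 1` and `V ⊗ U = Ṽ ⊗ Ũ`, then the factors coincide. -/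
theorem kronecker_param_injective {n : ℕ}
    (U V U' V' : Matrix (Fin n) (Fin n) ℝ)
    (hU : U.PosDef) (hV : V.PosDef) (hU' : U'.PosDef) (hV' : V'.PosDef)
    (hdU : U.det = 1) (hdU' : U'.det = 1)
    (h : V ⊗ₖ U = V' ⊗ₖ U') :
    U = U' ∧ V = V' := by
  rcases Nat.eq_zero_or_pos n with hn | hn
  · subst hn
    constructor <;> · ext i; exact i.elim0
  have i0 : Fin n := ⟨0, hn⟩
  have key : ∀ a b c d, V a b * U c d = V' a b * U' c d := by
    intro a b c d
    have := congrFun (congrFun h (a, c)) (b, d)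
    simpa [kroneckerMap_apply] using this
  have hV0 : 0 < V i0 i0 := posdef_diag_pos hV i0
  have hV0' : 0 < V' i0 i0 := posdef_diag_pos hV' i0
  set c : ℝ := V i0 i0 / V' i0 i0 with hc
  have hcpos : 0 < c := div_pos hV0 hV0'
  have hU'eq : U' = c • U := by
    ext i j
    have := key i0 i0 i j
    rw [Matrix.smul_apply, smul_eq_mul, hc]
    field_simp
    linarith [this]
  have hdet : c ^ n = 1 := by
    have : U'.det = (c • U).det := by rw [hU'eq]
    rw [det_smul, hdU, hdU', Fintype.card_fin, mul_one] at this
    exact this.symm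
  have hc1 : c = 1 := by
    rcases lt_trichotomy c 1 with hlt | heq | hgt
    · exact absurd hdet (by nlinarith [pow_lt_one₀ hcpos.le hlt hn.ne'])
    · exact heq
    · exact absurd hdet (by nlinarith [one_lt_pow₀ hgt hn.ne'])
  have hUU : U = U' := by rw [hU'eq, hc1, one_smul]
  refine ⟨hUU, ?_⟩
  ext a b
  have hU0 : 0 < U i0 i0 := posdef_diag_pos hU i0
  have := key a b i0 i0
  rw [← hUU] at this
  exact mul_right_cancel₀ hU0.ne' this
end

section
/- Let U, V ∈ S++^n with det U = 1, and let H_U, H_V be n×n real symmetric matrices with tr(U⁻¹ H_U) = 0. If V ⊗ H_U + H_V ⊗ U = 0, then H_U = 0 and H_V = 0. -/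
open Matrix Kronecker

/-- Immersion property of the differential of `Φ(U,V) = V ⊗ U` under the
determinant-one gauge: if `tr(U⁻¹ H_U) = 0` and `V ⊗ H_U + H_V ⊗ U = 0`,
then `H_U = 0` and `H_V = 0`. -/
theorem kronecker_differential_injective {n : ℕ}
    (U V HU HV : Matrix (Fin n) (Fin n) ℝ)
    (hU : U.PosDef) (hV : V.PosDef) (hdU : U.det = 1)
    (hHU : HU.IsSymm) (hHV : HV.IsSymm)
    (htr : (U⁻¹ * HU).trace = 0)
    (h : V ⊗ₖ HU + HV ⊗ₖ U = 0) :
    HU = 0 ∧ HV = 0 := by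
  rcases Nat.eq_zero_or_pos n with hn | hn
  · subst hn
    constructor <;> (ext i; exact i.elim0)
  · set i0 : Fin n := ⟨0, hn⟩
    have key : ∀ a b k l : Fin n, V a b * HU k l + HV a b * U k l = 0 := by
      intro a b k l
      have := congrFun (congrFun h (a, k)) (b, l)
      simpa [Matrix.kroneckerMap_apply] using this
    have hVpos : 0 < V i0 i0 := posdef_diag_pos hV i0
    set c : ℝ := -HV i0 i0 / V i0 i0 with hc
    have hHUc : HU = c • U := by
      ext k l
      have hk := key i0 i0 k l
      rw [Matrix.smul_apply, smul_eq_mul, hc]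
      field_simp [hVpos.ne']
      linarith [hk]
    have hUinv : U⁻¹ * U = 1 := Matrix.nonsing_inv_mul U (by simp [hdU])
    have htr2 : c * (n : ℝ) = 0 := by
      have : (U⁻¹ * HU).trace = c * (n : ℝ) := by
        rw [hHUc, Matrix.mul_smul, hUinv, Matrix.trace_smul]
        simp [Matrix.trace_one]
      rw [this] at htr
      exact htr
    have hc0 : c = 0 := by
      have hn' : (n : ℝ) ≠ 0 := Nat.cast_ne_zero.mpr hn.ne'
      exact (mul_eq_zero.mp htr2).resolve_right hn'
    have hHU0 : HU = 0 := by rw [hHUc, hc0, zero_smul]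
    refine ⟨hHU0, ?_⟩
    have hUpos : 0 < U i0 i0 := posdef_diag_pos hU i0
    ext a b
    have := key a b i0 i0
    rw [hHU0] at this
    simp only [Matrix.zero_apply, mul_zero, zero_add] at this
    have := mul_eq_zero.mp this
    simpa [hUpos.ne'] using this
end

section
/- Let K_i = V_i ⊗ U_i for i = 0,1 with U_i, V_i ∈ S++^n, and set A := V₀^{1/2} V₁ V₀^{1/2}, B := U₀^{1/2} U₁ U₀^{1/2}. Then the squared Bures–Wasserstein distance satisfies d_B²(K₀, K₁) = tr(U₀)tr(V₀) + tr(U₁)tr(V₁) − 2 tr(A^{1/2}) tr(B^{1/2}). -/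
open Matrix Kronecker

/-- The positive semidefinite square root of a positive semidefinite matrix,
extended by `0` to all matrices.  On symmetric positive definite matrices this
is the unique symmetric positive definite square root. -/
noncomputable def matSqrt {m : Type*} [Fintype m] [DecidableEq m]
    (A : Matrix m m ℝ) : Matrix m m ℝ :=
  open scoped Classical in
  if h : A.PosSemidef then
    h.1.eigenvectorUnitary.1 * diagonal ((↑) ∘ (√·) ∘ h.1.eigenvalues)
      * (star h.1.eigenvectorUnitary : Matrix m m ℝ) else 0

/-- The squared Bures--Wasserstein distance on positive definite matrices. -/
noncomputable def buresDistSq {m : Type*} [Fintype m] [DecidableEq m]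
    (A B : Matrix m m ℝ) : ℝ :=
  A.trace + B.trace - 2 * (matSqrt (matSqrt A * B * matSqrt A)).trace

open scoped MatrixOrder

lemma matSqrt_eq {m : Type*} [Fintype m] [DecidableEq m]
    {A : Matrix m m ℝ} (hA : A.PosSemidef) : matSqrt A = CFC.sqrt A := by
  rw [matSqrt, dif_pos hA, CFC.sqrt_eq_real_sqrt A hA.nonneg, cfcₙ_eq_cfc (hf0 := Real.sqrt_zero), hA.1.cfc_eq, IsHermitian.cfc,
    Unitary.conjStarAlgAut_apply]
  rfl

lemma posSemidef_kron {m l : Type*} [Fintype m] [DecidableEq m] [Fintype l] [DecidableEq l]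
    {A : Matrix m m ℝ} {B : Matrix l l ℝ} (hA : A.PosSemidef) (hB : B.PosSemidef) :
    (A ⊗ₖ B).PosSemidef := by
  have h : A ⊗ₖ B = (CFC.sqrt A ⊗ₖ CFC.sqrt B)ᴴ * (CFC.sqrt A ⊗ₖ CFC.sqrt B) := by
    rw [conjTranspose_eq_transpose_of_trivial, ← kroneckerMap_transpose, ← mul_kronecker_mul,
      (conjTranspose_eq_transpose_of_trivial (CFC.sqrt A)).symm.trans (CFC.sqrt_nonneg A).posSemidef.isHermitian,
      (conjTranspose_eq_transpose_of_trivial (CFC.sqrt B)).symm.trans (CFC.sqrt_nonneg B).posSemidef.isHermitian,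
      CFC.sqrt_mul_sqrt_self A hA.nonneg, CFC.sqrt_mul_sqrt_self B hB.nonneg]
  rw [h]
  exact posSemidef_conjTranspose_mul_self _

lemma matSqrt_kron {m l : Type*} [Fintype m] [DecidableEq m] [Fintype l] [DecidableEq l]
    {A : Matrix m m ℝ} {B : Matrix l l ℝ} (hA : A.PosSemidef) (hB : B.PosSemidef) :
    matSqrt (A ⊗ₖ B) = matSqrt A ⊗ₖ matSqrt B := by
  rw [matSqrt_eq (posSemidef_kron hA hB), matSqrt_eq hA, matSqrt_eq hB]
  refine (CFC.sqrt_eq_iff _ _ (posSemidef_kron hA hB).nonneg (posSemidef_kron (CFC.sqrt_nonneg A).posSemidef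
    (CFC.sqrt_nonneg B).posSemidef).nonneg).mpr ((pow_two _).symm.trans ?_)
  rw [pow_two, ← mul_kronecker_mul, CFC.sqrt_mul_sqrt_self A hA.nonneg, CFC.sqrt_mul_sqrt_self B hB.nonneg]

/-- Pairwise Kronecker reduction of the squared Bures--Wasserstein distance:
`d_B²(V₀⊗U₀, V₁⊗U₁) = tr U₀ tr V₀ + tr U₁ tr V₁ − 2 tr(A^{1/2}) tr(B^{1/2})`
with `A = V₀^{1/2} V₁ V₀^{1/2}` and `B = U₀^{1/2} U₁ U₀^{1/2}`. -/
theorem buresDistSq_kronecker {n : ℕ}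
    (U₀ U₁ V₀ V₁ : Matrix (Fin n) (Fin n) ℝ)
    (hU₀ : U₀.PosDef) (hU₁ : U₁.PosDef) (hV₀ : V₀.PosDef) (hV₁ : V₁.PosDef) :
    buresDistSq (V₀ ⊗ₖ U₀) (V₁ ⊗ₖ U₁)
      = U₀.trace * V₀.trace + U₁.trace * V₁.trace
        - 2 * (matSqrt (matSqrt V₀ * V₁ * matSqrt V₀)).trace
            * (matSqrt (matSqrt U₀ * U₁ * matSqrt U₀)).trace := by
  have hA : (matSqrt V₀ * V₁ * matSqrt V₀).PosSemidef := by
    rw [matSqrt_eq hV₀.posSemidef]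
    have := hV₁.posSemidef.mul_mul_conjTranspose_same (CFC.sqrt V₀)
    rwa [(CFC.sqrt_nonneg V₀).posSemidef.isHermitian.eq] at this
  have hB : (matSqrt U₀ * U₁ * matSqrt U₀).PosSemidef := by
    rw [matSqrt_eq hU₀.posSemidef]
    have := hU₁.posSemidef.mul_mul_conjTranspose_same (CFC.sqrt U₀)
    rwa [(CFC.sqrt_nonneg U₀).posSemidef.isHermitian.eq] at this
  have key : matSqrt (V₀ ⊗ₖ U₀) * (V₁ ⊗ₖ U₁) * matSqrt (V₀ ⊗ₖ U₀)
      = (matSqrt V₀ * V₁ * matSqrt V₀) ⊗ₖ (matSqrt U₀ * U₁ * matSqrt U₀) := by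
    rw [matSqrt_kron hV₀.posSemidef hU₀.posSemidef, ← mul_kronecker_mul, ← mul_kronecker_mul]
  rw [buresDistSq, key, matSqrt_kron hA hB, trace_kronecker, trace_kronecker, trace_kronecker]
  ring
end

section
/- Define Π(Z) := Z − (1/n) I_n ⊗ tr₁(Z) − (1/n) tr₂(Z) ⊗ I_n + (tr(Z)/n²) I_{n²} for Z an n²×n² real symmetric matrix, where tr₁(Z) = Σ_q Z_{qq} (sum of diagonal n×n blocks) and tr₂(Z) = [tr(Z_{qr})]_{q,r}. Then Π(Z) = 0 if and only if Z = I_n ⊗ A + B ⊗ I_n for some symmetric n×n matrices A, B with tr(A) = 0. -/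
open Matrix Kronecker

variable {n : ℕ}

/-- First partial trace: sum of the diagonal `n×n` blocks,
`tr₁(Z)_{p s} = Σ_q Z_{(q,p),(q,s)}` (so that `tr₁(V ⊗ U) = tr(V)·U`). -/
def ptrace1 (Z : Matrix (Fin n × Fin n) (Fin n × Fin n) ℝ) :
    Matrix (Fin n) (Fin n) ℝ :=
  Matrix.of fun p s => ∑ q : Fin n, Z (q, p) (q, s)

/-- Second partial trace: blockwise traces,
`tr₂(Z)_{q r} = Σ_p Z_{(q,p),(r,p)}` (so that `tr₂(V ⊗ U) = tr(U)·V`). -/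
def ptrace2 (Z : Matrix (Fin n × Fin n) (Fin n × Fin n) ℝ) :
    Matrix (Fin n) (Fin n) ℝ :=
  Matrix.of fun q r => ∑ p : Fin n, Z (q, p) (r, p)

/-- The partial-trace residual
`Π(Z) = Z − (1/n) I ⊗ tr₁(Z) − (1/n) tr₂(Z) ⊗ I + (tr Z / n²) I`. -/
noncomputable def piRes (Z : Matrix (Fin n × Fin n) (Fin n × Fin n) ℝ) :
    Matrix (Fin n × Fin n) (Fin n × Fin n) ℝ :=
  Z - ((n : ℝ)⁻¹) • ((1 : Matrix (Fin n) (Fin n) ℝ) ⊗ₖ ptrace1 Z)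
    - ((n : ℝ)⁻¹) • (ptrace2 Z ⊗ₖ (1 : Matrix (Fin n) (Fin n) ℝ))
    + (Z.trace / (n : ℝ) ^ 2) • (1 : Matrix (Fin n × Fin n) (Fin n × Fin n) ℝ)

lemma ptrace1_kron (V U : Matrix (Fin n) (Fin n) ℝ) :
    ptrace1 (V ⊗ₖ U) = V.trace • U := by
  ext p s
  simp [ptrace1, Matrix.trace, Matrix.diag, Finset.sum_mul]

lemma ptrace2_kron (V U : Matrix (Fin n) (Fin n) ℝ) :
    ptrace2 (V ⊗ₖ U) = U.trace • V := by
  ext q r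
  simp [ptrace2, Matrix.trace, Matrix.diag, Finset.mul_sum, mul_comm]

lemma ptrace1_add (X Y : Matrix (Fin n × Fin n) (Fin n × Fin n) ℝ) :
    ptrace1 (X + Y) = ptrace1 X + ptrace1 Y := by
  ext p s; simp [ptrace1, Finset.sum_add_distrib]

lemma ptrace2_add (X Y : Matrix (Fin n × Fin n) (Fin n × Fin n) ℝ) :
    ptrace2 (X + Y) = ptrace2 X + ptrace2 Y := by
  ext p s; simp [ptrace2, Finset.sum_add_distrib]

lemma trace_ptrace1 (Z : Matrix (Fin n × Fin n) (Fin n × Fin n) ℝ) :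
    (ptrace1 Z).trace = Z.trace := by
  simp [ptrace1, Matrix.trace, Matrix.diag, Fintype.sum_prod_type]
  exact Finset.sum_comm

lemma kron_sub' (A B C : Matrix (Fin n) (Fin n) ℝ) :
    A ⊗ₖ (B - C) = A ⊗ₖ B - A ⊗ₖ C := by
  ext; simp [mul_sub]

lemma ptrace1_isSymm {Z : Matrix (Fin n × Fin n) (Fin n × Fin n) ℝ}
    (hZ : Z.IsSymm) : (ptrace1 Z).IsSymm := by
  ext p s
  simp only [Matrix.transpose_apply, ptrace1, Matrix.of_apply]
  exact Finset.sum_congr rfl fun q _ => hZ.apply _ _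

lemma ptrace2_isSymm {Z : Matrix (Fin n × Fin n) (Fin n × Fin n) ℝ}
    (hZ : Z.IsSymm) : (ptrace2 Z).IsSymm := by
  ext q r
  simp only [Matrix.transpose_apply, ptrace2, Matrix.of_apply]
  exact Finset.sum_congr rfl fun p _ => hZ.apply _ _

/-- `Π(Z) = 0` iff `Z = I ⊗ A + B ⊗ I` with `A, B` symmetric, `tr A = 0`. -/
theorem piRes_eq_zero_iff [NeZero n]
    (Z : Matrix (Fin n × Fin n) (Fin n × Fin n) ℝ) (hZ : Z.IsSymm) :
    piRes Z = 0
      ↔ ∃ A B : Matrix (Fin n) (Fin n) ℝ, A.IsSymm ∧ B.IsSymm ∧ A.trace = 0 ∧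
          Z = (1 : Matrix (Fin n) (Fin n) ℝ) ⊗ₖ A
              + B ⊗ₖ (1 : Matrix (Fin n) (Fin n) ℝ) := by
  have hn : (n : ℝ) ≠ 0 := Nat.cast_ne_zero.mpr (NeZero.ne n)
  constructor
  · intro h
    refine ⟨(n : ℝ)⁻¹ • ptrace1 Z - (Z.trace / (n : ℝ) ^ 2) • 1,
        (n : ℝ)⁻¹ • ptrace2 Z, ?_, ?_, ?_, ?_⟩
    · exact ((ptrace1_isSymm hZ).smul _).sub (Matrix.isSymm_one.smul _)
    · exact (ptrace2_isSymm hZ).smul _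
    · rw [Matrix.trace_sub, Matrix.trace_smul, Matrix.trace_smul, trace_ptrace1,
        Matrix.trace_one]
      simp only [Fintype.card_fin, smul_eq_mul]
      field_simp
      ring
    · have h' : Z = ((n : ℝ)⁻¹) • ((1 : Matrix (Fin n) (Fin n) ℝ) ⊗ₖ ptrace1 Z)
          + ((n : ℝ)⁻¹) • (ptrace2 Z ⊗ₖ (1 : Matrix (Fin n) (Fin n) ℝ))
          - (Z.trace / (n : ℝ) ^ 2) • (1 : Matrix (Fin n × Fin n) (Fin n × Fin n) ℝ) := by
        have := h
        unfold piRes at this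
        linear_combination (norm := module) this
      conv_lhs => rw [h']
      rw [kron_sub', Matrix.kronecker_smul, Matrix.kronecker_smul, Matrix.smul_kronecker,
        Matrix.one_kronecker_one]
      module
  · rintro ⟨A, B, -, -, hA0, rfl⟩
    unfold piRes
    rw [ptrace1_add, ptrace2_add, ptrace1_kron, ptrace1_kron, ptrace2_kron, ptrace2_kron,
      Matrix.trace_add, Matrix.trace_kronecker, Matrix.trace_kronecker, Matrix.trace_one,
      hA0, Matrix.kronecker_add, Matrix.add_kronecker, Matrix.kronecker_smul,
      Matrix.kronecker_smul, Matrix.smul_kronecker, Matrix.smul_kronecker,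
      Matrix.one_kronecker_one]
    simp only [Fintype.card_fin, smul_add, smul_smul, mul_zero, zero_mul, zero_add,
      add_zero, zero_smul, smul_zero, inv_mul_cancel₀ hn, one_smul]
    have : B.trace * (n : ℝ) / (n : ℝ) ^ 2 = (n : ℝ)⁻¹ * B.trace := by
      field_simp
    rw [this]
    module
end

section
/- Let D_V, D_U be positive diagonal n×n matrices, S_V, S_U ∈ S++^n, and set P := D_V^{−1/2} S_V D_V^{1/2}, Q := D_U^{−1/2} S_U D_U^{1/2}. If P ⊗ Q + Pᵀ ⊗ Qᵀ − 2 I_{n²} = I_n ⊗ A + B ⊗ I_n for some symmetric matrices A, B, then P = λ I_n for some λ > 0 or Q = μ I_n for some μ > 0. -/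
open Matrix Kronecker

lemma posDef_diag_pos {n : ℕ} {M : Matrix (Fin n) (Fin n) ℝ} (hM : M.PosDef)
    (i : Fin n) : 0 < M i i := by
  have := hM.dotProduct_mulVec_pos (x := Pi.single i 1) (by simp [Function.ne_iff])
  simpa using this

lemma kron_rigidity_aux {n : ℕ} (P Q A B : Matrix (Fin n) (Fin n) ℝ)
    (hPd : ∀ i, 0 < P i i) (hQd : ∀ k, 0 < Q k k)
    (hP0 : ∀ i j, P i j + P j i = 0 → P i j = 0)
    (hQ0 : ∀ k l, Q k l + Q l k = 0 → Q k l = 0)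
    (E : ∀ i j k l : Fin n, P i j * Q k l + P j i * Q l k
      - (if i = j ∧ k = l then 2 else 0)
      = (if i = j then A k l else 0) + (if k = l then B i j else 0)) :
    (∃ l : ℝ, 0 < l ∧ P = l • (1 : Matrix (Fin n) (Fin n) ℝ))
    ∨ (∃ m : ℝ, 0 < m ∧ Q = m • (1 : Matrix (Fin n) (Fin n) ℝ)) := by
  rcases Nat.eq_zero_or_pos n with h0 | hpos
  · subst h0
    exact Or.inl ⟨1, one_pos, by ext i; exact i.elim0⟩
  haveI : NeZero n := ⟨hpos.ne'⟩
  by_cases hQoff : ∀ k l : Fin n, k ≠ l → Q k l = 0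
  · by_cases hQc : ∀ k l : Fin n, Q k k = Q l l
    · right
      refine ⟨Q 0 0, hQd 0, ?_⟩
      ext k l
      by_cases hkl : k = l
      · subst hkl; simp [Matrix.one_apply, hQc k 0]
      · simp [Matrix.one_apply, hkl, hQoff k l hkl]
    · push_neg at hQc
      obtain ⟨k, l, hkl⟩ := hQc
      have hPoff : ∀ i j, i ≠ j → P i j = 0 := by
        intro i j hij
        apply hP0
        have E1 := E i j k k; have E2 := E i j l l
        simp [hij] at E1 E2
        have h5 : (P i j + P j i) * (Q k k - Q l l) = 0 := by nlinarith [E1, E2]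
        rcases mul_eq_zero.mp h5 with h' | h'
        · exact h'
        · exact absurd (sub_eq_zero.mp h') hkl
      have hPdiag : ∀ i : Fin n, P i i = P 0 0 := by
        intro i
        have E1 := E i i k k; have E2 := E 0 0 k k
        have E3 := E i i l l; have E4 := E 0 0 l l
        simp at E1 E2 E3 E4
        have h5 : (P i i - P 0 0) * (Q k k - Q l l) = 0 := by nlinarith [E1, E2, E3, E4]
        rcases mul_eq_zero.mp h5 with h' | h'
        · linarith [sub_eq_zero.mp h']
        · exact absurd (sub_eq_zero.mp h') hkl
      left
      refine ⟨P 0 0, hPd 0, ?_⟩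
      ext i j
      by_cases hij : i = j
      · subst hij; simp [Matrix.one_apply, hPdiag i]
      · simp [Matrix.one_apply, hij, hPoff i j hij]
  · push_neg at hQoff
    obtain ⟨k, l, hkl, hQkl⟩ := hQoff
    have hsum : Q k l + Q l k ≠ 0 := fun hs => hQkl (hQ0 k l hs)
    have hPoff : ∀ i j, i ≠ j → P i j = 0 := by
      intro i j hij
      apply hP0
      have E1 := E i j k l; have E2 := E i j l k
      simp [hij, hkl, Ne.symm hkl] at E1 E2
      have h5 : (P i j + P j i) * (Q k l + Q l k) = 0 := by nlinarith [E1, E2]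
      exact (mul_eq_zero.mp h5).resolve_right hsum
    have hPdiag : ∀ i : Fin n, P i i = P 0 0 := by
      intro i
      have E1 := E i i k l; have E2 := E 0 0 k l
      simp [hkl] at E1 E2
      have h5 : (P i i - P 0 0) * (Q k l + Q l k) = 0 := by nlinarith [E1, E2]
      have := (mul_eq_zero.mp h5).resolve_right hsum
      linarith [sub_eq_zero.mp this]
    left
    refine ⟨P 0 0, hPd 0, ?_⟩
    ext i j
    by_cases hij : i = j
    · subst hij; simp [Matrix.one_apply, hPdiag i]
    · simp [Matrix.one_apply, hij, hPoff i j hij]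

/-- Transport Kronecker-sum rigidity: with positive diagonal `D_V, D_U`,
`S_V, S_U` positive definite, `P = D_V^{−1/2} S_V D_V^{1/2}`,
`Q = D_U^{−1/2} S_U D_U^{1/2}`, if
`P ⊗ Q + Pᵀ ⊗ Qᵀ − 2I = I ⊗ A + B ⊗ I` for symmetric `A, B`, then `P` or `Q`
is a positive scalar multiple of the identity. -/
theorem transport_kronecker_sum_rigidity {n : ℕ}
    (v u : Fin n → ℝ) (hv : ∀ i, 0 < v i) (hu : ∀ i, 0 < u i)
    (SV SU : Matrix (Fin n) (Fin n) ℝ) (hSV : SV.PosDef) (hSU : SU.PosDef)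
    (A B : Matrix (Fin n) (Fin n) ℝ) (hA : A.IsSymm) (hB : B.IsSymm)
    (P Q : Matrix (Fin n) (Fin n) ℝ)
    (hP : P = diagonal (fun i => (Real.sqrt (v i))⁻¹) * SV
        * diagonal (fun i => Real.sqrt (v i)))
    (hQ : Q = diagonal (fun i => (Real.sqrt (u i))⁻¹) * SU
        * diagonal (fun i => Real.sqrt (u i)))
    (h : P ⊗ₖ Q + Pᵀ ⊗ₖ Qᵀ
        - (2 : ℝ) • (1 : Matrix (Fin n × Fin n) (Fin n × Fin n) ℝ)
        = (1 : Matrix (Fin n) (Fin n) ℝ) ⊗ₖ A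
          + B ⊗ₖ (1 : Matrix (Fin n) (Fin n) ℝ)) :
    (∃ l : ℝ, 0 < l ∧ P = l • (1 : Matrix (Fin n) (Fin n) ℝ))
    ∨ (∃ m : ℝ, 0 < m ∧ Q = m • (1 : Matrix (Fin n) (Fin n) ℝ)) := by
  have hPapp : ∀ i j, P i j = (Real.sqrt (v i))⁻¹ * SV i j * Real.sqrt (v j) := by
    intro i j
    rw [hP]
    simp [Matrix.mul_diagonal, Matrix.diagonal_mul]
  have hQapp : ∀ i j, Q i j = (Real.sqrt (u i))⁻¹ * SU i j * Real.sqrt (u j) := by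
    intro i j
    rw [hQ]
    simp [Matrix.mul_diagonal, Matrix.diagonal_mul]
  have hva : ∀ i, 0 < Real.sqrt (v i) := fun i => Real.sqrt_pos.mpr (hv i)
  have hua : ∀ i, 0 < Real.sqrt (u i) := fun i => Real.sqrt_pos.mpr (hu i)
  have key : ∀ (S : Matrix (Fin n) (Fin n) ℝ), S.PosDef →
      ∀ (w : Fin n → ℝ), (∀ i, 0 < w i) →
      ∀ (R : Matrix (Fin n) (Fin n) ℝ),
      (∀ i j, R i j = (w i)⁻¹ * S i j * w j) →
      (∀ i, 0 < R i i) ∧ (∀ i j, R i j + R j i = 0 → R i j = 0) := by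
    intro S hS w hw R hR
    constructor
    · intro i
      rw [hR]
      have := posDef_diag_pos hS i
      have hwi := hw i
      have : 0 < (w i)⁻¹ * S i i * w i := by positivity
      exact this
    · intro i j hij
      have hsym : S j i = S i j := by
        have := hS.isHermitian.apply i j
        simpa using this
      rw [hR i j, hR j i, hsym] at hij
      have hwi := hw i; have hwj := hw j
      have hc : 0 < (w i)⁻¹ * w j + (w j)⁻¹ * w i := by positivity
      have h2 : S i j * ((w i)⁻¹ * w j + (w j)⁻¹ * w i) = 0 := by
        linear_combination hij
      have hz : S i j = 0 := (mul_eq_zero.mp h2).resolve_right hc.ne'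
      rw [hR, hz]
      ring
  obtain ⟨hPd, hP0⟩ := key SV hSV (fun i => Real.sqrt (v i)) hva P hPapp
  obtain ⟨hQd, hQ0⟩ := key SU hSU (fun i => Real.sqrt (u i)) hua Q hQapp
  refine kron_rigidity_aux P Q A B hPd hQd hP0 hQ0 ?_
  intro i j k l
  have H := congrFun (congrFun h (i, k)) (j, l)
  simp only [Matrix.add_apply, Matrix.sub_apply, Matrix.smul_apply, Matrix.kroneckerMap_apply,
    Matrix.one_apply, Prod.mk.injEq, Matrix.transpose_apply, smul_eq_mul] at H
  by_cases hij : i = j <;> by_cases hkl : k = l <;>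
    simp [hij, hkl] at H ⊢ <;> linarith
end
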